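/- Arm Lemma, base case m = 1. Let o, u, v ∈ ℝ² (identified with ℂ) satisfy |u − o| = |v − o| ≠ 0, with arg(u − o) and arg(v − o) both in the open interval (−π/10, π/10) and arg(v − o) > arg(u − o). Then v − u is nonzero and arg(v − u) ∈ (π/2 − π/10, π/2 + π/10). -/

import Mathlib

open Complex Real Set

/-- **Arm Lemma, base case m = 1.** -/
theorem arm_lemma_base_case (o u v : ℂ)
    (hne : u - o ≠ 0)
    (hlen : ‖u - o‖ = ‖v - o‖)
    (huarg : Complex.arg (u - o) ∈ Set.Ioo (-(π / 10)) (π / 10))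
    (hvarg : Complex.arg (v - o) ∈ Set.Ioo (-(π / 10)) (π / 10))
    (hlt : Complex.arg (u - o) < Complex.arg (v - o)) :
    v - u ≠ 0 ∧ Complex.arg (v - u) ∈ Set.Ioo (π / 2 - π / 10) (π / 2 + π / 10) := by
  obtain ⟨hu1, hu2⟩ := huarg
  obtain ⟨hv1, hv2⟩ := hvarg
  have hpi : (0:ℝ) < π := Real.pi_pos
  set α := Complex.arg (u - o) with hα
  set β := Complex.arg (v - o) with hβ
  set r := ‖u - o‖ with hr
  have hrpos : 0 < r := by
    rw [hr]
    exact norm_pos_iff.mpr hne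
  set d := (β - α) / 2 with hd
  set m := (α + β) / 2 with hm
  have hdpos : 0 < d := by rw [hd]; linarith
  have hdlt : d < π / 10 := by rw [hd]; linarith
  have hsin : 0 < Real.sin d := Real.sin_pos_of_pos_of_lt_pi hdpos (by linarith)
  set φ := m + π / 2 with hφ
  have hφ1 : π / 2 - π / 10 < φ := by rw [hφ, hm]; linarith
  have hφ2 : φ < π / 2 + π / 10 := by rw [hφ, hm]; linarith
  have hφlo : -π < φ := by rw [hφ, hm]; linarith
  have hφhi : φ ≤ π := by rw [hφ, hm]; linarith
  have hβr : β = m + d := by rw [hm, hd]; ring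
  have hαr : α = m - d := by rw [hm, hd]; ring
  have hre : Real.cos β - Real.cos α = 2 * Real.sin d * Real.cos φ := by
    rw [hβr, hαr, hφ, Real.cos_add, Real.cos_sub, Real.cos_add, Real.cos_pi_div_two,
      Real.sin_pi_div_two]
    ring
  have him : Real.sin β - Real.sin α = 2 * Real.sin d * Real.sin φ := by
    rw [hβr, hαr, hφ, Real.sin_add, Real.sin_sub, Real.sin_add, Real.cos_pi_div_two,
      Real.sin_pi_div_two]
    ring
  have hu' : u - o = (r : ℂ) * Complex.exp (α * Complex.I) :=
    (Complex.norm_mul_exp_arg_mul_I (u - o)).symm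
  have hv' : v - o = (r : ℂ) * Complex.exp (β * Complex.I) := by
    rw [hlen]
    exact (Complex.norm_mul_exp_arg_mul_I (v - o)).symm
  have e1 : Complex.cos ↑β - Complex.cos ↑α = 2 * Complex.sin ↑d * Complex.cos ↑φ := by
    rw [← Complex.ofReal_cos, ← Complex.ofReal_cos, ← Complex.ofReal_sin, ← Complex.ofReal_cos]
    exact_mod_cast hre
  have e2 : Complex.sin ↑β - Complex.sin ↑α = 2 * Complex.sin ↑d * Complex.sin ↑φ := by
    rw [← Complex.ofReal_sin, ← Complex.ofReal_sin, ← Complex.ofReal_sin, ← Complex.ofReal_sin]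
    exact_mod_cast him
  have key : v - u =
      ((2 * r * Real.sin d : ℝ) : ℂ) * (Complex.cos φ + Complex.sin φ * Complex.I) := by
    have h1 : v - u = (v - o) - (u - o) := by ring
    rw [h1, hu', hv', Complex.exp_mul_I, Complex.exp_mul_I]
    push_cast
    linear_combination (r : ℂ) * e1 + (r : ℂ) * Complex.I * e2
  have hcpos : (0:ℝ) < 2 * r * Real.sin d := by positivity
  constructor
  · rw [key]
    apply mul_ne_zero
    · exact_mod_cast ne_of_gt hcpos
    · intro h
      have h2 : ‖Complex.cos φ + Complex.sin φ * Complex.I‖ = 1 := by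
        rw [← Complex.exp_mul_I]
        exact Complex.norm_exp_ofReal_mul_I φ
      rw [h, norm_zero] at h2
      norm_num at h2
  · rw [key, Complex.arg_real_mul _ hcpos,
      Complex.arg_cos_add_sin_mul_I ⟨hφlo, hφhi⟩]
    exact ⟨hφ1, hφ2⟩
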